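/- arXiv:1402.2620 — 4 statements merged into one kernel-verified Lean document; each statement's English description precedes it below -/
import Mathlib

section
/- Let H₁ = {h : [0,∞) → ℝ : h(t) = ∫₀^t h'(s) ds for some h' ∈ L²([0,∞))} with inner product ⟨h, g⟩ = ∫₀^∞ h'(s) g'(s) ds, and let V₁ = {h ∈ H₁ : h' is nonincreasing}. If h ∈ H₁ satisfies ⟨h, v⟩ ≤ 0 for every v ∈ V₁, then h(t) ≤ 0 for every t ≥ 0. -/
open MeasureTheory Set intervalIntegral

/-- If `h` is in the Cameron–Martin space of the Wiener process (i.e. `h` is the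
indefinite integral of a square-integrable `h'`) and `h` lies in the polar cone of
`V₁` (the cone of elements whose derivative is nonincreasing), then `h ≤ 0`. -/
theorem polar_cone_nonpositive
    (h' : ℝ → ℝ) (hL2 : MemLp h' 2 (volume.restrict (Ici 0)))
    (h : ℝ → ℝ) (hdef : ∀ t, h t = ∫ s in (0:ℝ)..t, h' s)
    (hpolar : ∀ v' : ℝ → ℝ, MemLp v' 2 (volume.restrict (Ici 0)) →
      AntitoneOn v' (Ici 0) → (∫ s in Ici (0:ℝ), h' s * v' s) ≤ 0) :
    ∀ t, 0 ≤ t → h t ≤ 0 := by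
  intro t ht
  set v' : ℝ → ℝ := (Iic t).indicator (fun _ => (1:ℝ)) with hv'
  have hmem : MemLp v' 2 (volume.restrict (Ici 0)) := by
    refine memLp_indicator_const 2 measurableSet_Iic 1 (Or.inr ?_)
    rw [Measure.restrict_apply measurableSet_Iic]
    have : Iic t ∩ Ici 0 ⊆ Icc 0 t := fun x hx => ⟨hx.2, hx.1⟩
    exact ((measure_mono this).trans_lt (by simp)).ne
  have hanti : AntitoneOn v' (Ici 0) := by
    intro a _ b _ hab
    by_cases hb : b ≤ t
    · simp [hv', indicator_of_mem, hb, le_trans hab hb]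
    · have : v' b = 0 := by simp [hv', indicator_of_notMem, hb]
      rw [this]
      exact indicator_nonneg (fun _ _ => zero_le_one) a
  have key := hpolar v' hmem hanti
  have heq : (∫ s in Ici (0:ℝ), h' s * v' s) = h t := by
    have h1 : ∀ s, h' s * v' s = (Iic t).indicator h' s := by
      intro s
      by_cases hs : s ∈ Iic t
      · simp [hv', indicator_of_mem, hs]
      · simp [hv', indicator_of_notMem, hs]
    simp_rw [h1]
    rw [setIntegral_indicator measurableSet_Iic]
    have h2 : Ici (0:ℝ) ∩ Iic t = Icc 0 t := by ext x; simp [mem_Icc, and_comm]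
    rw [h2, hdef t, intervalIntegral.integral_of_le ht,
      MeasureTheory.integral_Icc_eq_integral_Ioc]
  linarith [heq ▸ key]
end

section
/- Let u, φ' : [0,∞) → ℝ with u nonincreasing, nonnegative, u(t) → 0 as t → ∞, φ' ∈ L²([0,∞)), u ∈ L²([0,∞)), and suppose φ(t) = ∫₀^t φ'(s) ds ≥ 0 for all t. Then ∫₀^∞ u(s) φ'(s) ds ≥ 0. -/
open MeasureTheory Set Filter intervalIntegral
open scoped ENNReal NNReal

private lemma key_nonneg
    (u φ' : ℝ → ℝ)
    (hu_anti : Antitone u)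
    (hu_nonneg : ∀ t, 0 ≤ u t)
    (hu_lim : Tendsto u atTop (nhds 0))
    (hφ'L2 : MemLp φ' 2 (volume.restrict (Ici 0)))
    (hmul : Integrable (fun s => u s * φ' s) (volume.restrict (Ici 0)))
    (φ : ℝ → ℝ) (hφdef : ∀ t, φ t = ∫ s in (0:ℝ)..t, φ' s)
    (hφ_nonneg : ∀ t, 0 ≤ t → 0 ≤ φ t) :
    0 ≤ ∫ s in Ici (0:ℝ), u s * φ' s := by
  set μ := volume.restrict (Ici (0:ℝ)) with hμ
  set ν := volume.restrict (Ioi (0:ℝ)) with hν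
  have hum : Measurable u := hu_anti.measurable
  set S : Set (ℝ × ℝ) := {p | p.2 < u p.1} with hSdef
  have hS : MeasurableSet S := measurableSet_lt measurable_snd (hum.comp measurable_fst)
  set F : ℝ × ℝ → ℝ := S.indicator (fun p => φ' p.1) with hF
  have hFmeas : AEStronglyMeasurable F (μ.prod ν) :=
    (hφ'L2.aestronglyMeasurable.comp_fst).indicator hS
  -- slice description of F
  have hslice : ∀ s : ℝ, (fun l => F (s, l)) = (Iio (u s)).indicator (fun _ => φ' s) := by
    intro s
    ext l
    by_cases h : l < u s <;> simp [hF, hSdef, indicator, h]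
  have hνIio : ∀ s : ℝ, ν (Iio (u s)) = ENNReal.ofReal (u s) := by
    intro s
    rw [hν, Measure.restrict_apply measurableSet_Iio, inter_comm, Set.Ioi_inter_Iio,
      Real.volume_Ioo, sub_zero]
  -- integrability of F on the product
  have hInt : Integrable F (μ.prod ν) := by
    refine ⟨hFmeas, ?_⟩
    rw [HasFiniteIntegral, lintegral_prod _ hFmeas.enorm]
    have : ∀ s : ℝ, ∫⁻ l, (‖F (s, l)‖₊ : ℝ≥0∞) ∂ν = (‖u s * φ' s‖₊ : ℝ≥0∞) := by
      intro s
      have h1 : (fun l => (‖F (s, l)‖₊ : ℝ≥0∞)) =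
          (Iio (u s)).indicator (fun _ => (‖φ' s‖₊ : ℝ≥0∞)) := by
        ext l
        by_cases h : l < u s <;> simp [hF, hSdef, indicator, h]
      rw [h1, lintegral_indicator measurableSet_Iio, setLIntegral_const, hνIio s,
        nnnorm_mul, ENNReal.coe_mul, ← Real.enorm_eq_ofReal (hu_nonneg s), enorm_eq_nnnorm]
      ring
    calc ∫⁻ s, ∫⁻ l, (‖F (s, l)‖₊ : ℝ≥0∞) ∂ν ∂μ
        = ∫⁻ s, (‖u s * φ' s‖₊ : ℝ≥0∞) ∂μ := by
          exact lintegral_congr fun s => this s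
      _ < ⊤ := hmul.2
  -- first computation of the double integral
  have eq1 : ∫ p, F p ∂(μ.prod ν) = ∫ s, u s * φ' s ∂μ := by
    rw [integral_prod F hInt]
    refine integral_congr_ae (Eventually.of_forall fun s => ?_)
    show (∫ l, F (s, l) ∂ν) = u s * φ' s
    rw [hslice s, integral_indicator_const _ measurableSet_Iio, measureReal_def, hνIio s,
      ENNReal.toReal_ofReal (hu_nonneg s), smul_eq_mul]
  -- nonnegativity of each slice integral in the other order
  have hg : ∀ l ∈ Ioi (0:ℝ), 0 ≤ ∫ s, F (s, l) ∂μ := by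
    intro l hl
    have hFl : (fun s => F (s, l)) = (u ⁻¹' Ioi l).indicator φ' := by
      ext s
      by_cases h : l < u s <;> simp [hF, hSdef, indicator, h]
    have hA : MeasurableSet (u ⁻¹' Ioi l) := hum measurableSet_Ioi
    rw [hFl, MeasureTheory.integral_indicator hA, hμ, Measure.restrict_restrict hA]
    set B : Set ℝ := u ⁻¹' Ioi l ∩ Ici 0 with hB
    rcases B.eq_empty_or_nonempty with hBe | hBne
    · rw [hBe]; simp
    · -- B is bounded above
      obtain ⟨T, hT⟩ := eventually_atTop.1 (hu_lim.eventually_lt_const hl)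
      have hBdd : BddAbove B := by
        refine ⟨T, fun x hx => ?_⟩
        by_contra hxT
        exact absurd (hT x (le_of_not_ge hxT)) (not_lt.2 (le_of_lt hx.1))
      set b := sSup B with hb
      have hb0 : 0 ≤ b := by
        obtain ⟨x, hx⟩ := hBne
        exact le_trans hx.2 (le_csSup hBdd hx)
      have hsub1 : Ico 0 b ⊆ B := by
        intro x hx
        obtain ⟨y, hy, hxy⟩ := exists_lt_of_lt_csSup hBne hx.2
        exact ⟨lt_of_lt_of_le hy.1 (hu_anti hxy.le), hx.1⟩
      have hsub2 : B ⊆ Icc 0 b := fun x hx => ⟨hx.2, le_csSup hBdd hx⟩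
      have hae : B =ᵐ[volume] Ioc 0 b := by
        rw [MeasureTheory.ae_eq_set]
        constructor
        · refine measure_mono_null (fun x hx => ?_) (Real.volume_singleton (a := 0))
          have h1 := hsub2 hx.1
          have h2 := hx.2
          simp only [mem_Ioc, not_and, not_le] at h2
          have : x ≤ 0 := by
            by_contra hc
            exact absurd (h2 (lt_of_not_ge hc)) (not_lt.2 h1.2)
          exact le_antisymm this h1.1
        · refine measure_mono_null (fun x hx => ?_) (Real.volume_singleton (a := b))
          have h1 := hx.1
          have h2 := hx.2
          rcases lt_or_eq_of_le h1.2 with hlt | heq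
          · exact absurd (hsub1 ⟨h1.1.le, hlt⟩) h2
          · exact heq
      rw [setIntegral_congr_set hae, ← intervalIntegral.integral_of_le hb0, ← hφdef b]
      exact hφ_nonneg b hb0
  -- conclude
  have eq2 : ∫ p, F p ∂(μ.prod ν) = ∫ l, (∫ s, F (s, l) ∂μ) ∂ν :=
    integral_prod_symm F hInt
  show 0 ≤ ∫ s, u s * φ' s ∂μ
  rw [← eq1, eq2]
  exact integral_nonneg_of_ae ((ae_restrict_iff' measurableSet_Ioi).2
    (Eventually.of_forall hg))

theorem inner_product_with_nonneg_element_nonneg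
    (u φ' : ℝ → ℝ)
    (hu_anti : AntitoneOn u (Ici 0))
    (hu_nonneg : ∀ t, 0 ≤ t → 0 ≤ u t)
    (hu_lim : Tendsto u atTop (nhds 0))
    (hφ'L2 : MemLp φ' 2 (volume.restrict (Ici 0)))
    (huL2 : MemLp u 2 (volume.restrict (Ici 0)))
    (φ : ℝ → ℝ) (hφdef : ∀ t, φ t = ∫ s in (0:ℝ)..t, φ' s)
    (hφ_nonneg : ∀ t, 0 ≤ t → 0 ≤ φ t) :
    0 ≤ ∫ s in Ici (0:ℝ), u s * φ' s := by
  set v : ℝ → ℝ := fun t => u (max t 0) with hv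
  have hveq : EqOn u v (Ici 0) := fun s hs => by
    simp only [hv, max_eq_left (mem_Ici.1 hs)]
  have hae : u =ᵐ[volume.restrict (Ici 0)] v :=
    (ae_restrict_iff' measurableSet_Ici).2 (Eventually.of_forall fun s hs => hveq hs)
  have hv_anti : Antitone v := fun a b hab =>
    hu_anti (le_max_right a 0) (le_max_right b 0) (max_le_max hab le_rfl)
  have hv_nonneg : ∀ t, 0 ≤ v t := fun t => hu_nonneg _ (le_max_right t 0)
  have hv_lim : Tendsto v atTop (nhds 0) := by
    refine hu_lim.congr' (eventually_atTop.2 ⟨0, fun t ht => ?_⟩)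
    simp [hv, max_eq_left ht]
  have hvL2 : MemLp v 2 (volume.restrict (Ici 0)) := huL2.ae_eq hae
  have hmul : Integrable (fun s => v s * φ' s) (volume.restrict (Ici 0)) := by
    have h := L2.integrable_inner (𝕜 := ℝ) (hvL2.toLp v) (hφ'L2.toLp φ')
    refine h.congr ?_
    filter_upwards [hvL2.coeFn_toLp, hφ'L2.coeFn_toLp] with s h1 h2
    simp [h1, h2, RCLike.inner_apply, mul_comm]
  have heq : ∫ s in Ici (0:ℝ), u s * φ' s = ∫ s in Ici (0:ℝ), v s * φ' s :=
    setIntegral_congr_fun measurableSet_Ici fun s hs => by rw [hveq hs]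
  rw [heq]
  exact key_nonneg v φ' hv_anti hv_nonneg hv_lim hφ'L2 hmul φ hφdef hφ_nonneg
end

section
/- Let h'' ∈ L²([0,∞)², λ₂), T > 0, T⃗ = (T,T), and define v''(s) = (∫_{[s, T⃗]} max(h(u), 0) du)·1_{s ≤ T⃗} where h(t) = ∫_{[0,t]} h''(u) du. Then ∫_{[0,∞)²} v''(s)² ds ≤ T⁸ ∫_{[0,∞)²} h''(s)² ds. -/
open MeasureTheory Set

theorem vsecond_sq_integral_bound_two_param
    (h'' : ℝ × ℝ → ℝ)
    (hL2 : MemLp h'' 2 (volume.restrict (Ici (0:ℝ) ×ˢ Ici (0:ℝ))))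
    (h : ℝ × ℝ → ℝ)
    (hdef : ∀ t : ℝ × ℝ, h t = ∫ u in Icc (0:ℝ) t.1 ×ˢ Icc (0:ℝ) t.2, h'' u)
    (T : ℝ) (hT : 0 < T)
    (v'' : ℝ × ℝ → ℝ)
    (hv'' : ∀ s : ℝ × ℝ, v'' s =
      ({p : ℝ × ℝ | p.1 ≤ T ∧ p.2 ≤ T}).indicator
        (fun s => ∫ u in Icc s.1 T ×ˢ Icc s.2 T, max (h u) 0) s) :
    (∫ s in Ici (0:ℝ) ×ˢ Ici (0:ℝ), (v'' s) ^ 2) ≤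
      T ^ 8 * ∫ s in Ici (0:ℝ) ×ˢ Ici (0:ℝ), (h'' s) ^ 2 := by
  set S : Set (ℝ×ℝ) := Ici (0:ℝ) ×ˢ Ici (0:ℝ) with hSdef
  set K : Set (ℝ×ℝ) := Icc (0:ℝ) T ×ˢ Icc (0:ℝ) T with hKdef
  have hKS : K ⊆ S := prod_mono Icc_subset_Ici_self Icc_subset_Ici_self
  have hKm : MeasurableSet K := measurableSet_Icc.prod measurableSet_Icc
  have hSm : MeasurableSet S := measurableSet_Ici.prod measurableSet_Ici
  have hKvol : volume K = ENNReal.ofReal T * ENNReal.ofReal T := by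
    rw [hKdef, Measure.volume_eq_prod, Measure.prod_prod, Real.volume_Icc, sub_zero]
  have hKvolR : (volume K).toReal = T * T := by
    rw [hKvol, ENNReal.toReal_mul, ENNReal.toReal_ofReal hT.le]
  have hKfin : volume K < ⊤ := by
    rw [hKvol]; exact ENNReal.mul_lt_top ENNReal.ofReal_lt_top ENNReal.ofReal_lt_top
  have hL2K : MemLp h'' 2 (volume.restrict K) :=
    hL2.mono_measure (Measure.restrict_mono hKS le_rfl)
  haveI : IsFiniteMeasure (volume.restrict K) := ⟨by rwa [Measure.restrict_apply_univ]⟩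
  have hInt : IntegrableOn h'' K := hL2K.integrable (by norm_num)
  set M : ℝ := ∫ u in K, |h'' u| with hMdef
  have hM0 : 0 ≤ M := setIntegral_nonneg hKm fun _ _ => abs_nonneg _
  -- pointwise bound |h u| ≤ M for u ∈ K
  have hbh : ∀ u ∈ K, |h u| ≤ M := by
    intro u hu
    obtain ⟨hu1, hu2⟩ := hu
    rw [hdef]
    calc |∫ w in Icc (0:ℝ) u.1 ×ˢ Icc (0:ℝ) u.2, h'' w|
        ≤ ∫ w in Icc (0:ℝ) u.1 ×ˢ Icc (0:ℝ) u.2, |h'' w| := by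
          simpa [Real.norm_eq_abs] using
            norm_integral_le_integral_norm (μ := volume.restrict (Icc (0:ℝ) u.1 ×ˢ Icc (0:ℝ) u.2)) h''
      _ ≤ M := by
          refine setIntegral_mono_set hInt.abs
            (Filter.Eventually.of_forall fun _ => abs_nonneg _)
            (HasSubset.Subset.eventuallyLE ?_)
          exact prod_mono (Icc_subset_Icc le_rfl hu1.2) (Icc_subset_Icc le_rfl hu2.2)
  -- pointwise bound |v'' s| ≤ M * (T*T) for s ∈ S
  have hbv : ∀ s ∈ S, |v'' s| ≤ M * (T * T) := by
    intro s hs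
    rw [hv'']
    by_cases hst : s ∈ {p : ℝ × ℝ | p.1 ≤ T ∧ p.2 ≤ T}
    · rw [indicator_of_mem hst]
      have hsub : Icc s.1 T ×ˢ Icc s.2 T ⊆ K :=
        prod_mono (Icc_subset_Icc hs.1 le_rfl) (Icc_subset_Icc hs.2 le_rfl)
      have hfin2 : volume (Icc s.1 T ×ˢ Icc s.2 T) < ⊤ :=
        lt_of_le_of_lt (measure_mono hsub) hKfin
      have hb : ∀ u ∈ Icc s.1 T ×ˢ Icc s.2 T, ‖max (h u) 0‖ ≤ M := by
        intro u hu
        rw [Real.norm_of_nonneg (le_max_right _ _)]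
        exact le_trans (max_le (le_abs_self _) (abs_nonneg _)) (hbh u (hsub hu))
      have hkey := norm_setIntegral_le_of_norm_le_const hfin2 hb
      rw [Real.norm_eq_abs] at hkey
      refine hkey.trans ?_
      have hvle : (volume (Icc s.1 T ×ˢ Icc s.2 T)).toReal ≤ T * T := by
        rw [← hKvolR]
        exact ENNReal.toReal_mono hKfin.ne (measure_mono hsub)
      exact mul_le_mul_of_nonneg_left hvle hM0
    · rw [indicator_of_notMem hst, abs_zero]
      positivity
  -- pointwise: on S, v''² ≤ indicator of K of (M*(T*T))²
  have hpt : ∀ s ∈ S, v'' s ^ 2 ≤ K.indicator (fun _ => (M * (T * T)) ^ 2) s := by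
    intro s hs
    by_cases hsK : s ∈ K
    · rw [indicator_of_mem hsK]
      have := hbv s hs
      nlinarith [abs_nonneg (v'' s), sq_abs (v'' s)]
    · rw [indicator_of_notMem hsK]
      have : v'' s = 0 := by
        rw [hv'', indicator_of_notMem]
        intro hst
        exact hsK ⟨⟨hs.1, hst.1⟩, ⟨hs.2, hst.2⟩⟩
      rw [this]; norm_num
  have hg : Integrable (K.indicator fun _ => (M * (T * T)) ^ 2)
      (volume.restrict S) :=
    ((integrableOn_const (C := (M * (T*T))^2) hKfin.ne).integrable_indicator hKm).restrict
  have step1 : (∫ s in S, v'' s ^ 2) ≤ ∫ s in S, K.indicator (fun _ => (M * (T * T)) ^ 2) s :=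
    integral_mono_of_nonneg (Filter.Eventually.of_forall fun s => sq_nonneg _) hg
      ((ae_restrict_iff' hSm).2 (Filter.Eventually.of_forall hpt))
  have step2 : (∫ s in S, K.indicator (fun _ => (M * (T * T)) ^ 2) s)
      = (M * (T * T)) ^ 2 * (T * T) := by
    rw [setIntegral_indicator hKm, inter_eq_self_of_subset_right hKS,
      setIntegral_const, measureReal_def, hKvolR, smul_eq_mul, mul_comm]
  -- Cauchy-Schwarz: M ≤ sqrt I * T where I = ∫ K h''²
  set I : ℝ := ∫ s in K, h'' s ^ 2 with hIdef
  have hI0 : 0 ≤ I := setIntegral_nonneg hKm fun _ _ => sq_nonneg _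
  have hCS : M ≤ Real.sqrt I * T := by
    have hpq : Real.HolderConjugate 2 2 := (Real.holderConjugate_iff_eq_conjExponent one_lt_two).2 (by norm_num)
    have h2 : ENNReal.ofReal (2:ℝ) = 2 := by
      rw [ENNReal.ofReal_ofNat]
    have hmf : MemLp (fun u => |h'' u|) (ENNReal.ofReal (2:ℝ)) (volume.restrict K) := by
      rw [h2]; exact hL2K.abs
    have hmg : MemLp (fun _ : ℝ×ℝ => (1:ℝ)) (ENNReal.ofReal (2:ℝ)) (volume.restrict K) := by
      rw [h2]; exact memLp_const 1
    have := integral_mul_le_Lp_mul_Lq_of_nonneg hpq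
      (Filter.Eventually.of_forall fun u => abs_nonneg (h'' u))
      (Filter.Eventually.of_forall fun _ => zero_le_one) hmf hmg
    simp only [mul_one] at this
    have e1 : (∫ a in K, |h'' a| ^ (2:ℝ)) = I := by
      rw [hIdef]
      refine setIntegral_congr_fun hKm fun u _ => ?_
      rw [show ((2:ℝ)) = ((2:ℕ):ℝ) by norm_num, Real.rpow_natCast, sq_abs]
    have e2 : (∫ _ in K, (1:ℝ) ^ (2:ℝ)) = T * T := by
      simp only [Real.one_rpow]
      rw [setIntegral_const, measureReal_def, hKvolR, smul_eq_mul, mul_one]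
    rw [e1, e2] at this
    calc M ≤ I ^ (1/(2:ℝ)) * (T*T) ^ (1/(2:ℝ)) := this
      _ = Real.sqrt I * T := by
          rw [← Real.sqrt_eq_rpow, ← Real.sqrt_eq_rpow, Real.sqrt_mul_self hT.le]
  have hM2 : M ^ 2 ≤ I * T ^ 2 := by
    have := mul_le_mul hCS hCS hM0 (by positivity)
    calc M ^ 2 = M * M := sq M
      _ ≤ (Real.sqrt I * T) * (Real.sqrt I * T) := this
      _ = I * T ^ 2 := by
          rw [mul_mul_mul_comm, Real.mul_self_sqrt hI0]; ring
  have hIS : I ≤ ∫ s in S, h'' s ^ 2 := by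
    refine setIntegral_mono_set (hL2.integrable_sq)
      (Filter.Eventually.of_forall fun _ => sq_nonneg _)
      (HasSubset.Subset.eventuallyLE hKS)
  calc (∫ s in S, v'' s ^ 2) ≤ (M * (T * T)) ^ 2 * (T * T) := step1.trans step2.le
    _ = M ^ 2 * T ^ 6 := by ring
    _ ≤ (I * T ^ 2) * T ^ 6 := by nlinarith [sq_nonneg T, pow_pos hT 6]
    _ = T ^ 8 * I := by ring
    _ ≤ T ^ 8 * ∫ s in S, h'' s ^ 2 := by
        exact mul_le_mul_of_nonneg_left hIS (by positivity)
end

section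
/- Let h' ∈ L²([0,∞)) with h(t) = ∫₀^t h'(s) ds, and for T > 0 let v'(s) = (∫_s^T h(u)·1_{h(u)>0} du)·1_{s≤T}. If ∫₀^∞ h'(s) v'(s) ds ≤ 0, then ∫₀^T h(u)²·1_{h(u)>0} du = 0, i.e. h(u) ≤ 0 for almost every u ∈ [0,T]. -/
open MeasureTheory Set intervalIntegral

theorem fubini_polar_step
    (h' : ℝ → ℝ) (hL2 : MemLp h' 2 (volume.restrict (Ici 0)))
    (h : ℝ → ℝ) (hdef : ∀ t, h t = ∫ s in (0:ℝ)..t, h' s)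
    (T : ℝ) (hT : 0 < T)
    (v' : ℝ → ℝ)
    (hv' : ∀ s, v' s =
      (Iic T).indicator (fun s => ∫ u in s..T, ({x | 0 < h x}).indicator h u) s)
    (hneg : (∫ s in Ici (0:ℝ), h' s * v' s) ≤ 0) :
    (∫ u in (0:ℝ)..T, (h u) ^ 2 * ({x | 0 < h x}).indicator 1 u) = 0 ∧
      ∀ᵐ u ∂(volume.restrict (Icc (0:ℝ) T)), h u ≤ 0 := by
  classical
  set h'' : ℝ → ℝ := (Ici (0:ℝ)).indicator h' with hh''def
  have h''L2 : MemLp h'' 2 volume :=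
    (memLp_indicator_iff_restrict measurableSet_Ici).mpr hL2
  have h''ii : ∀ a b : ℝ, IntervalIntegrable h'' volume a b := by
    intro a b
    rw [intervalIntegrable_iff]
    haveI : Fact (volume (Set.uIoc a b) < ⊤) := ⟨measure_Ioc_lt_top⟩
    exact (h''L2.restrict _).integrable one_le_two
  set P : ℝ → ℝ := fun t => ∫ s in (0:ℝ)..t, h'' s with hPdef
  have Pcont : Continuous P := intervalIntegral.continuous_primitive h''ii 0
  have hhP : ∀ t, 0 ≤ t → h t = P t := by
    intro t ht
    rw [hdef t, hPdef]
    simp only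
    rw [intervalIntegral.integral_of_le ht, intervalIntegral.integral_of_le ht]
    refine setIntegral_congr_fun measurableSet_Ioc fun x hx => ?_
    exact (indicator_of_mem (le_of_lt hx.1 : (0:ℝ) ≤ x) h').symm
  set G : ℝ → ℝ := ({x | 0 < P x}).indicator P with hGdef
  have hSP : MeasurableSet {x | 0 < P x} := measurableSet_lt measurable_const Pcont.measurable
  have Gmeas : Measurable G := Pcont.measurable.indicator hSP
  have GleP : ∀ x, ‖G x‖ ≤ ‖P x‖ := fun x => norm_indicator_le_norm_self P x
  have hgG : ∀ u, 0 ≤ u → ({x | 0 < h x}).indicator h u = G u := by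
    intro u hu
    simp only [hGdef, indicator_apply, mem_setOf_eq, hhP u hu]
  -- integrabilities on [0, T]
  have h''int : IntegrableOn h'' (Icc (0:ℝ) T) volume :=
    (h''L2.restrict _).integrable one_le_two
  have Gint : IntegrableOn G (Icc (0:ℝ) T) volume := by
    refine Integrable.mono' (Pcont.norm.integrableOn_Icc) Gmeas.aestronglyMeasurable ?_
    exact Filter.Eventually.of_forall GleP
  -- the triangular indicator
  set e : ℝ → ℝ → ℝ := fun s u => if s ≤ u then (1:ℝ) else 0 with hedef
  -- Step 1: rewrite the hypothesis integral
  have e1 : (∫ s in Ici (0:ℝ), h' s * v' s)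
      = ∫ s in Icc (0:ℝ) T, ∫ u in Icc (0:ℝ) T, h'' s * (e s u * G u) := by
    have step : ∀ s ∈ Ici (0:ℝ), h' s * v' s
        = (Iic T).indicator
            (fun s => ∫ u in Icc (0:ℝ) T, h'' s * (e s u * G u)) s := by
      intro s hs
      have hs0 : (0:ℝ) ≤ s := hs
      by_cases hsT : s ≤ T
      · rw [hv' s, Set.indicator_of_mem (show s ∈ Iic T from hsT),
          Set.indicator_of_mem (show s ∈ Iic T from hsT), MeasureTheory.integral_const_mul]
        congr 1
        · exact (indicator_of_mem hs h').symm
        · -- ∫ s..T g = ∫ in Icc 0 T, e s u * G u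
          have h1 : (∫ u in s..T, ({x | 0 < h x}).indicator h u) = ∫ u in s..T, G u := by
            refine intervalIntegral.integral_congr fun x hx => ?_
            have : s ≤ x := by
              rcases hx with ⟨h1, h2⟩
              simpa [min_eq_left hsT] using h1
            exact hgG x (le_trans hs0 this)
          rw [h1, intervalIntegral.integral_of_le hsT, ← integral_Icc_eq_integral_Ioc]
          have h2 : ∀ u, e s u * G u = (Ici s).indicator G u := by
            intro u
            by_cases hc : s ≤ u <;>
              simp [hedef, indicator_apply, mem_Ici, hc]
          simp only [h2]
          rw [setIntegral_indicator measurableSet_Ici]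
          have hset : Icc (0:ℝ) T ∩ Ici s = Icc s T := by
            ext y
            simp only [mem_inter_iff, mem_Icc, mem_Ici]
            constructor
            · rintro ⟨⟨_, hyT⟩, hsy⟩; exact ⟨hsy, hyT⟩
            · rintro ⟨hsy, hyT⟩; exact ⟨⟨le_trans hs0 hsy, hyT⟩, hsy⟩
          rw [hset]
      · rw [hv' s, Set.indicator_of_notMem (show s ∉ Iic T from hsT),
          Set.indicator_of_notMem (show s ∉ Iic T from hsT), mul_zero]
    rw [setIntegral_congr_fun measurableSet_Ici step,
      setIntegral_indicator measurableSet_Iic, Ici_inter_Iic]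
  -- Fubini
  have eint : Integrable (Function.uncurry fun s u => h'' s * (e s u * G u))
      ((volume.restrict (Icc (0:ℝ) T)).prod (volume.restrict (Icc (0:ℝ) T))) := by
    have base : Integrable (fun p : ℝ × ℝ => h'' p.1 * G p.2)
        ((volume.restrict (Icc (0:ℝ) T)).prod (volume.restrict (Icc (0:ℝ) T))) :=
      h''int.mul_prod Gint
    have emeas : Measurable (fun p : ℝ × ℝ => e p.1 p.2) := by
      exact Measurable.ite (measurableSet_le measurable_fst measurable_snd)
        measurable_const measurable_const
    have : Integrable (fun p : ℝ × ℝ => e p.1 p.2 * (h'' p.1 * G p.2))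
        ((volume.restrict (Icc (0:ℝ) T)).prod (volume.restrict (Icc (0:ℝ) T))) := by
      refine base.bdd_mul (c := 1) emeas.aestronglyMeasurable (Filter.Eventually.of_forall fun p => ?_)
      by_cases hc : p.1 ≤ p.2 <;> simp [hedef, hc]
    refine this.congr ?_
    refine Filter.Eventually.of_forall fun p => ?_
    simp only [Function.uncurry]
    ring
  have e2 : (∫ s in Icc (0:ℝ) T, ∫ u in Icc (0:ℝ) T, h'' s * (e s u * G u))
      = ∫ u in Icc (0:ℝ) T, ∫ s in Icc (0:ℝ) T, h'' s * (e s u * G u) :=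
    integral_integral_swap eint
  -- inner integral computation
  have e3 : ∀ u ∈ Icc (0:ℝ) T,
      (∫ s in Icc (0:ℝ) T, h'' s * (e s u * G u)) = G u * P u := by
    intro u hu
    have : ∀ s, h'' s * (e s u * G u) = G u * ((Iic u).indicator h'' s) := by
      intro s
      by_cases hc : s ≤ u
      · simp only [hedef, indicator_apply, mem_Iic, if_pos hc]; ring
      · simp only [hedef, indicator_apply, mem_Iic, if_neg hc]; ring
    simp only [this]
    rw [MeasureTheory.integral_const_mul, setIntegral_indicator measurableSet_Iic]
    congr 1
    have hset : Icc (0:ℝ) T ∩ Iic u = Icc (0:ℝ) u := by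
      ext y
      simp only [mem_inter_iff, mem_Icc, mem_Iic]
      constructor
      · rintro ⟨⟨hy0, _⟩, hyu⟩; exact ⟨hy0, hyu⟩
      · rintro ⟨hy0, hyu⟩; exact ⟨⟨hy0, le_trans hyu hu.2⟩, hyu⟩
    rw [hset, integral_Icc_eq_integral_Ioc, hPdef]
    simp only
    rw [intervalIntegral.integral_of_le hu.1]
  have e4 : ∀ u ∈ Icc (0:ℝ) T,
      G u * P u = h u ^ 2 * ({x | 0 < h x}).indicator 1 u := by
    intro u hu
    simp only [hGdef, indicator_apply, mem_setOf_eq, hhP u hu.1]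
    by_cases hc : 0 < P u <;> simp [hc, sq]
  have key : (∫ s in Ici (0:ℝ), h' s * v' s)
      = ∫ u in Icc (0:ℝ) T, h u ^ 2 * ({x | 0 < h x}).indicator 1 u := by
    rw [e1, e2]
    refine setIntegral_congr_fun measurableSet_Icc fun u hu => ?_
    rw [e3 u hu, e4 u hu]
  -- conclusions
  have Fnonneg : ∀ u, 0 ≤ h u ^ 2 * ({x | 0 < h x}).indicator 1 u := fun u =>
    mul_nonneg (sq_nonneg _) (indicator_nonneg (fun _ _ => zero_le_one) u)
  have hle : (∫ u in Icc (0:ℝ) T, h u ^ 2 * ({x | 0 < h x}).indicator 1 u) ≤ 0 :=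
    key ▸ hneg
  have hge : 0 ≤ ∫ u in Icc (0:ℝ) T, h u ^ 2 * ({x | 0 < h x}).indicator 1 u :=
    setIntegral_nonneg measurableSet_Icc fun u _ => Fnonneg u
  have hzero : (∫ u in Icc (0:ℝ) T, h u ^ 2 * ({x | 0 < h x}).indicator 1 u) = 0 :=
    le_antisymm hle hge
  have first : (∫ u in (0:ℝ)..T, h u ^ 2 * ({x | 0 < h x}).indicator 1 u) = 0 := by
    rw [intervalIntegral.integral_of_le hT.le, ← integral_Icc_eq_integral_Ioc, hzero]
  refine ⟨first, ?_⟩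
  -- a.e. nonpositivity
  set Q : ℝ → ℝ := fun u => G u * P u with hQdef
  have Qnonneg : ∀ u, 0 ≤ Q u := by
    intro u
    by_cases hc : 0 < P u
    · simp only [hQdef, hGdef, indicator_apply, mem_setOf_eq, if_pos hc]
      exact mul_nonneg hc.le hc.le
    · simp only [hQdef, hGdef, indicator_apply, mem_setOf_eq, if_neg hc, zero_mul]
      exact le_refl 0
  have Qint : Integrable Q (volume.restrict (Icc (0:ℝ) T)) := by
    refine Integrable.mono' ((Pcont.mul Pcont).norm.integrableOn_Icc)
      (Gmeas.mul Pcont.measurable).aestronglyMeasurable ?_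
    refine Filter.Eventually.of_forall fun x => ?_
    calc ‖G x * P x‖ = ‖G x‖ * ‖P x‖ := norm_mul _ _
      _ ≤ ‖P x‖ * ‖P x‖ := mul_le_mul_of_nonneg_right (GleP x) (norm_nonneg _)
      _ = ‖P x * P x‖ := (norm_mul _ _).symm
  have Qzero : (∫ u in Icc (0:ℝ) T, Q u) = 0 := by
    rw [setIntegral_congr_fun measurableSet_Icc (fun u hu => e4 u hu), hzero]
  have Qae : Q =ᵐ[volume.restrict (Icc (0:ℝ) T)] 0 :=
    (integral_eq_zero_iff_of_nonneg Qnonneg Qint).mp Qzero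
  filter_upwards [Qae, ae_restrict_mem measurableSet_Icc] with u hQu hu
  by_contra hpos
  push_neg at hpos
  have hPu : 0 < P u := by rw [← hhP u hu.1]; exact hpos
  have : Q u = P u * P u := by
    simp only [hQdef, hGdef, indicator_apply, mem_setOf_eq, if_pos hPu]
  rw [this] at hQu
  exact absurd hQu (ne_of_gt (mul_pos hPu hPu))
end
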